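/- arXiv:2112.05363 — 3 statements merged into one kernel-verified Lean document; each statement's English description precedes it below -/
import Mathlib

section
/- Let Π̄, Π be symmetric n×n matrices with 0 ⪯ Π̄ ⪯ Π (Loewner order), and for a fixed positive semidefinite-valued matrix function define the operators T_Π̄(X) and T_Π(X) mapping a PSD matrix X to a weighted average of G(ω)(Π̄ ∘ X)G(ω)^H (respectively with Π). Then ρ(T_Π̄) ≤ ρ(T_Π). -/
open Matrix MeasureTheory
open scoped ComplexOrder

attribute [local instance] Matrix.normedAddCommGroup Matrix.normedSpace

section Aux

variable {n : ℕ}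

-- Schur product theorem
lemma schur_psd {A B : Matrix (Fin n) (Fin n) ℂ}
    (hA : A.PosSemidef) (hB : B.PosSemidef) : (Matrix.hadamard A B).PosSemidef := by
  exact hA.hadamard hB

lemma psd_smul {M : Matrix (Fin n) (Fin n) ℂ} (hM : M.PosSemidef)
    {c : ℂ} (hc : 0 ≤ c) : (c • M).PosSemidef := by
  refine PosSemidef.of_dotProduct_mulVec_nonneg ?_ ?_
  · have him : c.im = 0 := (Complex.le_def.mp hc).2.symm
    have hcc : star c = c := Complex.ext (by simp) (by simp [him])
    show (c • M)ᴴ = c • M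
    rw [conjTranspose_smul, hcc, hM.isHermitian.eq]
  · intro x
    rw [smul_mulVec, dotProduct_smul, smul_eq_mul]
    exact mul_nonneg hc (hM.dotProduct_mulVec_nonneg x)

lemma psd_diag_re {M : Matrix (Fin n) (Fin n) ℂ} (hM : M.PosSemidef)
    (i : Fin n) : 0 ≤ M i i := by
  have := hM.dotProduct_mulVec_nonneg (Pi.single i 1)
  simpa [dotProduct, mulVec, Pi.single_apply, Finset.sum_ite_eq] using this

lemma star_single (i : Fin n) :
    star (Pi.single i (1:ℂ) : Fin n → ℂ) = Pi.single i 1 := by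
  ext k
  simp [Pi.single_apply, apply_ite (star : ℂ → ℂ)]

lemma psd_entry_bound {M : Matrix (Fin n) (Fin n) ℂ} (hM : M.PosSemidef)
    (i j : Fin n) : 2 * ‖M i j‖ ≤ (M i i).re + (M j j).re := by
  have hdi : 0 ≤ (M i i).re := by simpa using (Complex.le_def.mp (psd_diag_re hM i)).1
  have hdj : 0 ≤ (M j j).re := by simpa using (Complex.le_def.mp (psd_diag_re hM j)).1
  rcases eq_or_ne i j with rfl | hij
  · have him : (M i i).im = 0 := (Complex.le_def.mp (psd_diag_re hM i)).2.symm
    have : M i i = ((M i i).re : ℂ) := by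
      apply Complex.ext <;> simp [him]
    rw [this]
    simp [Complex.norm_real, abs_of_nonneg hdi]
    linarith
  · rcases eq_or_ne (M i j) 0 with h0 | h0
    · simp only [h0, norm_zero, mul_zero]; linarith
    · set r : ℝ := ‖M i j‖ with hr
      have hrpos : 0 < r := norm_pos_iff.mpr h0
      set x : Fin n → ℂ := (-(M i j)) • (Pi.single i 1 : Fin n → ℂ)
          + ((r : ℂ)) • (Pi.single j 1 : Fin n → ℂ) with hx
      have hq := hM.dotProduct_mulVec_nonneg x
      have hsx : star x = (-(star (M i j))) • (Pi.single i 1 : Fin n → ℂ)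
          + ((r : ℂ)) • (Pi.single j 1 : Fin n → ℂ) := by
        rw [hx, star_add, star_smul, star_smul, star_single, star_single, star_neg,
          RCLike.star_def, Complex.conj_ofReal]
      have hji : M j i = star (M i j) := (hM.isHermitian.apply j i).symm
      have hconjmul : star (M i j) * M i j = ((r^2 : ℝ) : ℂ) := by
        rw [RCLike.star_def, mul_comm, Complex.mul_conj, Complex.normSq_eq_norm_sq,
          ← hr]
      have hexp : star x ⬝ᵥ M *ᵥ x
          = ((r:ℂ))^2 * M i i - 2 * ((r:ℂ))^3 + ((r:ℂ))^2 * M j j := by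
        rw [hsx, hx]
        simp only [mulVec_add, mulVec_smul, add_dotProduct, smul_dotProduct,
          dotProduct_add, dotProduct_smul, mulVec_single, smul_eq_mul]
        have e1 : (Pi.single i 1 : Fin n → ℂ) ⬝ᵥ M.col i = M i i := by
          simp [single_dotProduct]
        have e2 : (Pi.single i 1 : Fin n → ℂ) ⬝ᵥ M.col j = M i j := by
          simp [single_dotProduct]
        have e3 : (Pi.single j 1 : Fin n → ℂ) ⬝ᵥ M.col i = M j i := by
          simp [single_dotProduct]
        have e4 : (Pi.single j 1 : Fin n → ℂ) ⬝ᵥ M.col j = M j j := by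
          simp [single_dotProduct]
        simp only [MulOpposite.op_one, one_smul]
        rw [e1, e2, e3, e4, hji]
        push_cast at hconjmul ⊢
        linear_combination (M i i - 2*(r:ℂ)) * hconjmul
      rw [hexp] at hq
      have hq' : (0:ℂ) ≤ ((r^2:ℝ):ℂ) * M i i - ((2*r^3:ℝ):ℂ) + ((r^2:ℝ):ℂ) * M j j := by
        push_cast
        convert hq using 2
      have hre := (Complex.le_def.mp hq').1
      simp only [Complex.sub_re, Complex.add_re, Complex.mul_re, Complex.ofReal_re,
        Complex.ofReal_im, Complex.zero_re] at hre
      nlinarith [mul_pos hrpos hrpos, hrpos]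

lemma psd_norm_le {A B : Matrix (Fin n) (Fin n) ℂ}
    (hA : A.PosSemidef) (hBA : (B - A).PosSemidef) : ‖A‖ ≤ ‖B‖ := by
  rw [Matrix.norm_le_iff (norm_nonneg B)]
  intro i j
  have key := psd_entry_bound hA i j
  have hd : ∀ k, (A k k).re ≤ (B k k).re := by
    intro k
    have h := (Complex.le_def.mp (psd_diag_re hBA k)).1
    simp only [Matrix.sub_apply, Complex.sub_re, Complex.zero_re] at h
    linarith
  have hb : ∀ k, (B k k).re ≤ ‖B‖ := fun k =>
    le_trans (Complex.re_le_norm _) (le_trans (le_of_eq rfl)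
      (Matrix.norm_entry_le_entrywise_sup_norm B))
  have := hd i; have := hd j; have := hb i; have := hb j
  linarith

noncomputable def quadCLM (x : Fin n → ℂ) : Matrix (Fin n) (Fin n) ℂ →L[ℂ] ℂ :=
  LinearMap.toContinuousLinearMap
  { toFun := fun M => star x ⬝ᵥ M *ᵥ x
    map_add' := fun A B => by simp [add_mulVec, dotProduct_add]
    map_smul' := fun c A => by simp [smul_mulVec, dotProduct_smul] }

noncomputable def conjTransposeCLM :
    Matrix (Fin n) (Fin n) ℂ →L[ℝ] Matrix (Fin n) (Fin n) ℂ :=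
  LinearMap.toContinuousLinearMap
  { toFun := fun M => Mᴴ
    map_add' := fun A B => by simp [conjTranspose_add]
    map_smul' := fun c A => by simp [conjTranspose_smul] }

lemma integral_psd {f : ℝ → Matrix (Fin n) (Fin n) ℂ} (hf : Continuous f)
    (hpsd : ∀ ω, (f ω).PosSemidef) {a b : ℝ} (hab : a ≤ b) :
    (∫ ω in a..b, f ω).PosSemidef := by
  have hint := hf.intervalIntegrable (μ := MeasureTheory.volume) a b
  refine PosSemidef.of_dotProduct_mulVec_nonneg ?_ ?_
  · show (∫ ω in a..b, f ω)ᴴ = ∫ ω in a..b, f ω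
    have h1 : (∫ ω in a..b, f ω)ᴴ = conjTransposeCLM (∫ ω in a..b, f ω) := rfl
    rw [h1]
    refine (ContinuousLinearMap.intervalIntegral_comp_comm conjTransposeCLM hint).symm.trans ?_
    refine intervalIntegral.integral_congr fun ω _ => ?_
    exact (hpsd ω).isHermitian.eq
  · intro x
    have h1 : star x ⬝ᵥ (∫ ω in a..b, f ω) *ᵥ x = quadCLM x (∫ ω in a..b, f ω) := rfl
    rw [h1]
    refine le_of_le_of_eq (b := ∫ ω in a..b, quadCLM x (f ω)) ?_ (ContinuousLinearMap.intervalIntegral_comp_comm (quadCLM x) hint)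
    set g : ℝ → ℂ := fun ω => quadCLM x (f ω) with hg
    have hgc : Continuous g := (quadCLM x).continuous.comp hf
    have hgint : IntervalIntegrable g MeasureTheory.volume a b := hgc.intervalIntegrable _ _
    rw [Complex.le_def]
    constructor
    · have : (∫ ω in a..b, g ω).re = ∫ ω in a..b, (g ω).re := by
        rw [← Complex.reCLM_apply, ← ContinuousLinearMap.intervalIntegral_comp_comm _ hgint]
        rfl
      rw [this]
      simp only [Complex.zero_re]
      refine intervalIntegral.integral_nonneg hab fun u _ => ?_
      exact (Complex.le_def.mp ((hpsd u).dotProduct_mulVec_nonneg x)).1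
    · have : (∫ ω in a..b, g ω).im = ∫ ω in a..b, (g ω).im := by
        rw [← Complex.imCLM_apply, ← ContinuousLinearMap.intervalIntegral_comp_comm _ hgint]
        rfl
      rw [this]
      simp only [Complex.zero_im]
      symm
      have h0 : (∫ ω in a..b, (g ω).im) = ∫ ω in a..b, (0:ℝ) :=
        intervalIntegral.integral_congr fun u _ => by
          have := (Complex.le_def.mp ((hpsd u).dotProduct_mulVec_nonneg x)).2.symm
          exact this
      rw [h0]
      simp

lemma cpos : (0:ℂ) ≤ 1 / (2 * (Real.pi : ℂ)) := by
  have : (1 / (2 * (Real.pi : ℂ))) = ((1 / (2 * Real.pi) : ℝ) : ℂ) := by push_cast; ring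
  rw [this, Complex.zero_le_real]
  positivity

lemma integrand_continuous (G : ℝ → Matrix (Fin n) (Fin n) ℂ) (hG : Continuous G)
    (M : Matrix (Fin n) (Fin n) ℂ) :
    Continuous fun ω => G ω * M * (G ω)ᴴ :=
  (hG.matrix_mul continuous_const).matrix_mul hG.matrix_conjTranspose

lemma opPSD (G : ℝ → Matrix (Fin n) (Fin n) ℂ) (hG : Continuous G)
    {P X : Matrix (Fin n) (Fin n) ℂ} (hP : P.PosSemidef) (hX : X.PosSemidef) :
    ((1 / (2 * (Real.pi : ℂ))) •
      ∫ ω in (-Real.pi)..Real.pi, G ω * Matrix.hadamard P X * (G ω)ᴴ).PosSemidef := by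
  refine psd_smul ?_ cpos
  refine integral_psd (integrand_continuous G hG _) (fun ω => ?_) (by linarith [Real.pi_pos])
  exact (schur_psd hP hX).mul_mul_conjTranspose_same _

lemma op_sub (G : ℝ → Matrix (Fin n) (Fin n) ℂ) (hG : Continuous G)
    (P Q X : Matrix (Fin n) (Fin n) ℂ) :
    ((1 / (2 * (Real.pi : ℂ))) •
      ∫ ω in (-Real.pi)..Real.pi, G ω * Matrix.hadamard P X * (G ω)ᴴ)
    - ((1 / (2 * (Real.pi : ℂ))) •
      ∫ ω in (-Real.pi)..Real.pi, G ω * Matrix.hadamard Q X * (G ω)ᴴ)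
    = (1 / (2 * (Real.pi : ℂ))) •
      ∫ ω in (-Real.pi)..Real.pi, G ω * Matrix.hadamard (P - Q) X * (G ω)ᴴ := by
  rw [← smul_sub]
  congr 1
  rw [← intervalIntegral.integral_sub
    ((integrand_continuous G hG _).intervalIntegrable _ _)
    ((integrand_continuous G hG _).intervalIntegrable _ _)]
  refine intervalIntegral.integral_congr fun ω _ => ?_
  have : Matrix.hadamard (P - Q) X = Matrix.hadamard P X - Matrix.hadamard Q X := by
    ext i j; simp [Matrix.hadamard_apply, Matrix.sub_apply, sub_mul]
  rw [this, Matrix.mul_sub, Matrix.sub_mul]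

abbrev MatCLM (n : ℕ) : Type :=
  @ContinuousLinearMap ℂ ℂ _ _ (RingHom.id ℂ) (Matrix (Fin n) (Fin n) ℂ)
    (Matrix.normedAddCommGroup).toPseudoMetricSpace.toUniformSpace.toTopologicalSpace _
    (Matrix (Fin n) (Fin n) ℂ)
    (Matrix.normedAddCommGroup).toPseudoMetricSpace.toUniformSpace.toTopologicalSpace _ _ _

lemma exists_eigenvector {μ : ℂ} {T : MatCLM n}
    (hμ : μ ∈ spectrum ℂ T) :
    ∃ X : Matrix (Fin n) (Fin n) ℂ, X ≠ 0 ∧ ∀ k : ℕ, (T ^ k) X = μ ^ k • X := by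
  set e := Module.End.toContinuousLinearMap (𝕜 := ℂ) (Matrix (Fin n) (Fin n) ℂ)
  have hsp : μ ∈ spectrum ℂ (e.symm T) := by
    rw [← AlgEquiv.spectrum_eq e (e.symm T), e.apply_symm_apply]
    exact hμ
  have hev : Module.End.HasEigenvalue (e.symm T) μ :=
    Module.End.hasEigenvalue_iff_mem_spectrum.mpr hsp
  obtain ⟨v, hv⟩ := Module.End.HasEigenvalue.exists_hasEigenvector hev
  refine ⟨v, hv.2, fun k => ?_⟩
  have := hv.pow_apply k
  calc (T ^ k) v = ((e.symm T) ^ k) v := by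
        rw [← map_pow e.symm T k]; rfl
    _ = μ ^ k • v := this

lemma herm_split {H : Matrix (Fin n) (Fin n) ℂ} (hH : H.IsHermitian) :
    ∃ P N : Matrix (Fin n) (Fin n) ℂ, P.PosSemidef ∧ N.PosSemidef ∧ H = P - N := by
  classical
  set U : Matrix (Fin n) (Fin n) ℂ := (hH.eigenvectorUnitary : Matrix (Fin n) (Fin n) ℂ)
  refine ⟨U * diagonal (fun i => ((max (hH.eigenvalues i) 0 : ℝ) : ℂ)) * star U,
          U * diagonal (fun i => ((max (-hH.eigenvalues i) 0 : ℝ) : ℂ)) * star U, ?_, ?_, ?_⟩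
  · exact (posSemidef_diagonal_iff.mpr fun i => by
      rw [Complex.zero_le_real]; positivity).mul_mul_conjTranspose_same U
  · exact (posSemidef_diagonal_iff.mpr fun i => by
      rw [Complex.zero_le_real]; positivity).mul_mul_conjTranspose_same U
  · rw [← Matrix.sub_mul, ← Matrix.mul_sub, diagonal_sub]
    have : (fun i => ((max (hH.eigenvalues i) 0 : ℝ) : ℂ)
          - ((max (-hH.eigenvalues i) 0 : ℝ) : ℂ))
        = fun i => ((hH.eigenvalues i : ℝ) : ℂ) := by
      funext i
      rcases le_total (hH.eigenvalues i) 0 with h | h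
      · rw [max_eq_right h, max_eq_left (by linarith)]
        push_cast; ring
      · rw [max_eq_left h, max_eq_right (by linarith)]
        push_cast; ring
    rw [this]
    have := hH.spectral_theorem
    rw [Unitary.conjStarAlgAut_apply] at this
    exact this

lemma decomp (X : Matrix (Fin n) (Fin n) ℂ) :
    ∃ P0 P1 P2 P3 : Matrix (Fin n) (Fin n) ℂ, P0.PosSemidef ∧ P1.PosSemidef ∧
      P2.PosSemidef ∧ P3.PosSemidef ∧ X = P0 - P1 + Complex.I • (P2 - P3) := by
  set H : Matrix (Fin n) (Fin n) ℂ := ((1:ℂ)/2) • (X + Xᴴ) with hH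
  set K : Matrix (Fin n) (Fin n) ℂ := (-(Complex.I/2)) • (X - Xᴴ) with hK
  have hHh : H.IsHermitian := by
    show Hᴴ = H
    rw [hH, conjTranspose_smul, conjTranspose_add, conjTranspose_conjTranspose]
    congr 1
    · simp
    · rw [add_comm]
  have hKh : K.IsHermitian := by
    show Kᴴ = K
    rw [hK, conjTranspose_smul, conjTranspose_sub, conjTranspose_conjTranspose]
    have h1 : star (-(Complex.I/2)) = Complex.I/2 := by
      simp
      ring
    rw [h1]
    have : Xᴴ - X = -(X - Xᴴ) := by abel
    rw [this, smul_neg, ← neg_smul]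
  have hX : X = H + Complex.I • K := by
    rw [hH, hK, smul_smul]
    have hc : Complex.I * (-(Complex.I/2)) = 1/2 := by
      have := Complex.I_mul_I
      field_simp
      rw [sq, this, neg_neg]
    rw [hc]
    rw [smul_add, smul_sub]
    module
  obtain ⟨P0, P1, h0, h1, hH2⟩ := herm_split hHh
  obtain ⟨P2, P3, h2, h3, hK2⟩ := herm_split hKh
  exact ⟨P0, P1, P2, P3, h0, h1, h2, h3, by rw [hX, hH2, hK2]⟩

end Aux

theorem spectral_radius_monotone_in_correlation {n : ℕ}
    (G : ℝ → Matrix (Fin n) (Fin n) ℂ) (hG : Continuous G)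
    (Pib Pim : Matrix (Fin n) (Fin n) ℂ)
    (hPib : Pib.PosSemidef) (hle : (Pim - Pib).PosSemidef)
    (T₁ T₂ : Matrix (Fin n) (Fin n) ℂ →L[ℂ] Matrix (Fin n) (Fin n) ℂ)
    (hT₁ : ∀ X : Matrix (Fin n) (Fin n) ℂ,
      T₁ X = (1 / (2 * (Real.pi : ℂ))) •
        ∫ ω in (-Real.pi)..Real.pi, G ω * Matrix.hadamard Pib X * (G ω)ᴴ)
    (hT₂ : ∀ X : Matrix (Fin n) (Fin n) ℂ,
      T₂ X = (1 / (2 * (Real.pi : ℂ))) •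
        ∫ ω in (-Real.pi)..Real.pi, G ω * Matrix.hadamard Pim X * (G ω)ᴴ) :
    spectralRadius ℂ T₁ ≤ spectralRadius ℂ T₂ := by
  obtain ⟨T₁, rfl⟩ : ∃ S : MatCLM n, S = T₁ := ⟨T₁, rfl⟩
  obtain ⟨T₂, rfl⟩ : ∃ S : MatCLM n, S = T₂ := ⟨T₂, rfl⟩
  change ∀ X : Matrix (Fin n) (Fin n) ℂ, T₁ X = _ at hT₁
  change ∀ X : Matrix (Fin n) (Fin n) ℂ, T₂ X = _ at hT₂
  have hPim : Pim.PosSemidef := by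
    have := hle.add hPib
    simpa using this
  have key1 : ∀ Y : Matrix (Fin n) (Fin n) ℂ, Y.PosSemidef → (T₁ Y).PosSemidef := fun Y hY => by
    rw [hT₁]; exact opPSD G hG hPib hY
  have key2 : ∀ Y : Matrix (Fin n) (Fin n) ℂ, Y.PosSemidef → (T₂ Y).PosSemidef := fun Y hY => by
    rw [hT₂]; exact opPSD G hG hPim hY
  have keyd : ∀ Y : Matrix (Fin n) (Fin n) ℂ, Y.PosSemidef →
      (T₂ Y - T₁ Y).PosSemidef := fun Y hY => by
    rw [hT₁ Y, hT₂ Y, op_sub G hG Pim Pib Y]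
    exact opPSD G hG hle hY
  have mono : ∀ k : ℕ, ∀ Y : Matrix (Fin n) (Fin n) ℂ, Y.PosSemidef →
      ((T₁ ^ k) Y).PosSemidef ∧ ((T₂ ^ k) Y).PosSemidef ∧
      ((T₂ ^ k) Y - (T₁ ^ k) Y).PosSemidef := by
    intro k
    induction k with
    | zero =>
      intro Y hY
      simp only [pow_zero, ContinuousLinearMap.one_apply, sub_self]
      exact ⟨hY, hY, Matrix.PosSemidef.zero⟩
    | succ k ih =>
      intro Y hY
      obtain ⟨ih1, ih2, ih3⟩ := ih Y hY
      have e1 : (T₁ ^ (k+1)) Y = T₁ ((T₁ ^ k) Y) := by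
        rw [pow_succ']; rfl
      have e2 : (T₂ ^ (k+1)) Y = T₂ ((T₂ ^ k) Y) := by
        rw [pow_succ']; rfl
      refine ⟨e1 ▸ key1 _ ih1, e2 ▸ key2 _ ih2, ?_⟩
      have heq : (T₂ ^ (k+1)) Y - (T₁ ^ (k+1)) Y
          = T₂ ((T₂ ^ k) Y - (T₁ ^ k) Y) + (T₂ ((T₁ ^ k) Y) - T₁ ((T₁ ^ k) Y)) := by
        rw [e1, e2, map_sub]
        abel
      rw [heq]
      exact (key2 _ ih3).add (keyd _ ih1)
  refine iSup₂_le fun μ hμ => ?_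
  obtain ⟨X, hX0, hXk⟩ := exists_eigenvector hμ
  obtain ⟨P0, P1, P2, P3, h0, h1, h2, h3, hdec⟩ := decomp X
  set C : NNReal := ‖P0‖₊ + ‖P1‖₊ + ‖P2‖₊ + ‖P3‖₊ with hC
  have keyk : ∀ k : ℕ, ‖μ‖₊ ^ k * ‖X‖₊ ≤ C * ‖T₂ ^ k‖₊ := by
    intro k
    have hb : ∀ (P : Matrix (Fin n) (Fin n) ℂ), P.PosSemidef →
        ‖(T₁ ^ k) P‖₊ ≤ ‖T₂ ^ k‖₊ * ‖P‖₊ := by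
      intro P hP
      obtain ⟨m1, m2, m3⟩ := mono k P hP
      calc ‖(T₁ ^ k) P‖₊ ≤ ‖(T₂ ^ k) P‖₊ := by
            have := psd_norm_le m1 m3
            rw [← NNReal.coe_le_coe]
            simpa using this
        _ ≤ ‖T₂ ^ k‖₊ * ‖P‖₊ := ContinuousLinearMap.le_opNNNorm _ _
    have hXnorm : ‖(T₁ ^ k) X‖₊ = ‖μ‖₊ ^ k * ‖X‖₊ := by
      rw [hXk k, nnnorm_smul, nnnorm_pow]
    have hsplit : (T₁ ^ k) X
        = ((T₁ ^ k) P0 - (T₁ ^ k) P1) + Complex.I • ((T₁ ^ k) P2 - (T₁ ^ k) P3) := by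
      conv_lhs => rw [hdec]
      rw [map_add, map_sub, _root_.map_smul, map_sub]
    calc ‖μ‖₊ ^ k * ‖X‖₊ = ‖(T₁ ^ k) X‖₊ := hXnorm.symm
      _ ≤ ‖(T₁ ^ k) P0 - (T₁ ^ k) P1‖₊ + ‖Complex.I • ((T₁ ^ k) P2 - (T₁ ^ k) P3)‖₊ := by
          rw [hsplit]; exact nnnorm_add_le _ _
      _ ≤ (‖(T₁ ^ k) P0‖₊ + ‖(T₁ ^ k) P1‖₊) + (‖(T₁ ^ k) P2‖₊ + ‖(T₁ ^ k) P3‖₊) := by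
          rw [nnnorm_smul, Complex.nnnorm_I, one_mul]
          exact add_le_add (nnnorm_sub_le _ _) (nnnorm_sub_le _ _)
      _ ≤ (‖T₂ ^ k‖₊ * ‖P0‖₊ + ‖T₂ ^ k‖₊ * ‖P1‖₊)
          + (‖T₂ ^ k‖₊ * ‖P2‖₊ + ‖T₂ ^ k‖₊ * ‖P3‖₊) :=
          add_le_add (add_le_add (hb _ h0) (hb _ h1)) (add_le_add (hb _ h2) (hb _ h3))
      _ = C * ‖T₂ ^ k‖₊ := by rw [hC]; ring
  have hXne : ‖X‖₊ ≠ 0 := by simpa using hX0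
  set D : NNReal := C / ‖X‖₊ ⊔ 1 with hD
  have hD1 : (1:NNReal) ≤ D := le_max_right _ _
  have hDne : D ≠ 0 := by
    intro h
    rw [h] at hD1
    exact absurd hD1 (by norm_num)
  have keyD : ∀ k : ℕ, ‖μ‖₊ ^ k ≤ D * ‖T₂ ^ k‖₊ := by
    intro k
    have h1 : ‖μ‖₊ ^ k ≤ C / ‖X‖₊ * ‖T₂ ^ k‖₊ := by
      rw [div_mul_eq_mul_div, le_div_iff₀ (pos_iff_ne_zero.mpr hXne)]
      calc ‖μ‖₊ ^ k * ‖X‖₊ ≤ C * ‖T₂ ^ k‖₊ := keyk k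
        _ = C * ‖T₂ ^ k‖₊ := rfl
    exact h1.trans (mul_le_mul_left (le_max_left _ _) _)
  -- limits
  have hGelfand := spectrum.pow_nnnorm_pow_one_div_tendsto_nhds_spectralRadius T₂
  have hDlim : Filter.Tendsto (fun k : ℕ => (D : ENNReal) ^ (1/(k:ℝ)))
      Filter.atTop (nhds 1) := by
    have h1 : Filter.Tendsto (fun k : ℕ => 1/(k:ℝ)) Filter.atTop (nhds 0) :=
      tendsto_one_div_atTop_nhds_zero_nat
    have h2 : ContinuousAt (fun r : ℝ => ((D:ℝ) ^ r)) 0 :=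
      Real.continuousAt_const_rpow (by positivity)
    have h3 : Filter.Tendsto (fun k : ℕ => (D:ℝ) ^ (1/(k:ℝ)))
        Filter.atTop (nhds ((D:ℝ) ^ (0:ℝ))) := h2.tendsto.comp h1
    rw [Real.rpow_zero] at h3
    have h4 : Filter.Tendsto (fun k : ℕ => (D ^ (1/(k:ℝ)) : NNReal))
        Filter.atTop (nhds 1) := by
      rw [← NNReal.tendsto_coe]
      simpa [NNReal.coe_rpow] using h3
    have h5 := ENNReal.tendsto_coe.mpr h4
    rw [ENNReal.coe_one] at h5
    convert h5 using 2 with k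
    exact (ENNReal.coe_rpow_of_ne_zero hDne _).symm
  have hmul := ENNReal.Tendsto.mul hDlim (Or.inl one_ne_zero) hGelfand
    (Or.inr ENNReal.one_ne_top)
  rw [one_mul] at hmul
  refine ge_of_tendsto hmul ?_
  rw [Filter.eventually_atTop]
  refine ⟨1, fun k hk => ?_⟩
  have hkne : (k:ℝ) ≠ 0 := by
    have : (1:ℕ) ≤ k := hk
    positivity
  calc (‖μ‖₊ : ENNReal)
      = ((‖μ‖₊ : ENNReal) ^ (k:ℕ)) ^ (1/(k:ℝ)) := by
        rw [← ENNReal.rpow_natCast ((‖μ‖₊ : ENNReal)) k, ← ENNReal.rpow_mul,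
          mul_one_div_cancel hkne, ENNReal.rpow_one]
    _ ≤ (((D * ‖T₂ ^ k‖₊ : NNReal)) : ENNReal) ^ (1/(k:ℝ)) := by
        apply ENNReal.rpow_le_rpow _ (by positivity)
        rw [← ENNReal.coe_pow]
        exact_mod_cast ENNReal.coe_le_coe.mpr (keyD k)
    _ = (D : ENNReal) ^ (1/(k:ℝ)) * (‖T₂ ^ k‖₊ : ENNReal) ^ (1/(k:ℝ)) := by
        rw [ENNReal.coe_mul, ENNReal.mul_rpow_of_nonneg _ _ (by positivity)]
end

section
/- Fix real numbers p₁ with p₁ > 1, σ₁² ≥ 0, σ₂² ≥ 0, σ₁₂ with σ₁² - 2σ₁₂ + σ₂² > 0. For K ∈ (p₁ - 1, p₁ + 1), define f(K) = [(σ₁² - 2σ₁₂)K² + 2σ₂² p₁ K + σ₂²(1 - p₁²)] / (1 - (p₁ - K)²). Then the infimum of f over (p₁ - 1, p₁ + 1) is attained at K* = p₁ - 1/p₁ and equals (σ₁² - 2σ₁₂)(p₁² - 1) + σ₂² p₁². -/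
theorem inf_attained_case_I (p₁ σ₁sq σ₂sq σ₁₂ : ℝ)
    (hp : p₁ > 1) (h1 : σ₁sq ≥ 0) (h2 : σ₂sq ≥ 0)
    (hpos : σ₁sq - 2 * σ₁₂ + σ₂sq > 0)
    (f : ℝ → ℝ)
    (hf : ∀ K, f K = ((σ₁sq - 2 * σ₁₂) * K ^ 2 + 2 * σ₂sq * p₁ * K + σ₂sq * (1 - p₁ ^ 2)) /
        (1 - (p₁ - K) ^ 2)) :
    (p₁ - 1 / p₁) ∈ Set.Ioo (p₁ - 1) (p₁ + 1) ∧
    f (p₁ - 1 / p₁) = (σ₁sq - 2 * σ₁₂) * (p₁ ^ 2 - 1) + σ₂sq * p₁ ^ 2 ∧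
    ∀ K ∈ Set.Ioo (p₁ - 1) (p₁ + 1), f (p₁ - 1 / p₁) ≤ f K := by
  have hp0 : (0:ℝ) < p₁ := by linarith
  have hinv1 : 1 / p₁ < 1 := by rw [div_lt_one hp0]; linarith
  have hinv0 : 0 < 1 / p₁ := by positivity
  have hmem : (p₁ - 1 / p₁) ∈ Set.Ioo (p₁ - 1) (p₁ + 1) := ⟨by linarith, by linarith⟩
  have hDstar : 1 - (p₁ - (p₁ - 1 / p₁)) ^ 2 = (p₁ ^ 2 - 1) / p₁ ^ 2 := by
    have : p₁ ≠ 0 := ne_of_gt hp0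
    field_simp
    ring
  have hval : f (p₁ - 1 / p₁) = (σ₁sq - 2 * σ₁₂) * (p₁ ^ 2 - 1) + σ₂sq * p₁ ^ 2 := by
    rw [hf, hDstar]
    have hp2 : (0:ℝ) < p₁ ^ 2 - 1 := by nlinarith
    rw [div_eq_iff (by positivity : ((p₁ ^ 2 - 1) / p₁ ^ 2 : ℝ) ≠ 0)]
    field_simp
    ring
  refine ⟨hmem, hval, ?_⟩
  rintro K ⟨hK1, hK2⟩
  have hD : 0 < 1 - (p₁ - K) ^ 2 := by nlinarith
  rw [hval, hf]
  rw [le_div_iff₀ hD]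
  nlinarith [sq_nonneg (p₁ * K - (p₁ ^ 2 - 1)), hpos.le]
end

section
/- For real numbers a with |a| < 1 and real s₁, s₂, one has (1/2π) ∫_{-π}^{π} (e^{-iω} - s₁)(e^{iω} - s₂) / |e^{iω} - a|² dω = (1 + s₁s₂ - (s₁ + s₂)a)/(1 - a²). -/
open Real Complex

lemma denom_rw (a ω : ℝ) :
    (((‖Complex.exp (ω * Complex.I) - (a:ℂ)‖ : ℝ) : ℂ))^2
      = (Complex.exp (ω * Complex.I) - a) * (Complex.exp (-ω * Complex.I) - a) := by
  have h1 : (((‖Complex.exp (ω * Complex.I) - (a:ℂ)‖ : ℝ) : ℂ))^2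
      = ((Complex.normSq (Complex.exp (ω * Complex.I) - (a:ℂ)) : ℝ) : ℂ) := by
    rw [← Complex.sq_norm]
    push_cast
    ring
  have h2 : (starRingEnd ℂ) (Complex.exp (ω * Complex.I) - a) = Complex.exp (-ω * Complex.I) - a := by
    rw [map_sub, ← Complex.exp_conj]
    simp [Complex.conj_ofReal]
  rw [h1, ← Complex.mul_conj, h2]

lemma exp_sub_ne (a ω : ℝ) (ha : |a| < 1) : Complex.exp (ω * Complex.I) - (a:ℂ) ≠ 0 := by
  intro h
  have := congrArg (‖·‖) (sub_eq_zero.mp h)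
  rw [Complex.norm_exp_ofReal_mul_I, Complex.norm_real, Real.norm_eq_abs] at this
  linarith [ha]

lemma one_sub_ne (a ω : ℝ) (ha : |a| < 1) : (1:ℂ) - a * Complex.exp (ω * Complex.I) ≠ 0 := by
  intro h
  have h' : (a:ℂ) * Complex.exp (ω * Complex.I) = 1 := by linear_combination -h
  have := congrArg (‖·‖) h'
  rw [norm_mul, Complex.norm_exp_ofReal_mul_I, Complex.norm_real, Real.norm_eq_abs, norm_one, mul_one] at this
  linarith

lemma slit (a ω : ℝ) (ha : |a| < 1) : (1:ℂ) - a * Complex.exp (ω * Complex.I) ∈ Complex.slitPlane := by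
  rw [Complex.mem_slitPlane_iff]
  left
  have : ((1:ℂ) - a * Complex.exp (ω * Complex.I)).re = 1 - a * Real.cos ω := by
    simp [Complex.sub_re, Complex.mul_re, Complex.exp_ofReal_mul_I_re, Complex.exp_ofReal_mul_I_im]
  rw [this]
  nlinarith [neg_abs_le (a * Real.cos ω), abs_mul a (Real.cos ω), Real.abs_cos_le_one ω,
    mul_le_one₀ (le_of_lt ha) (abs_nonneg _) (Real.abs_cos_le_one ω), abs_nonneg a,
    le_abs_self (a * Real.cos ω)]

lemma hcont (a s₁ s₂ : ℝ) (ha : |a| < 1) :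
    Continuous (fun ω : ℝ =>
      (Complex.exp (-ω * Complex.I) - (s₁ : ℂ)) * (Complex.exp (ω * Complex.I) - (s₂ : ℂ)) /
        (((‖Complex.exp (ω * Complex.I) - (a : ℂ)‖ : ℝ) : ℂ)) ^ 2) := by
  apply Continuous.div
  · fun_prop
  · exact (Complex.continuous_ofReal.comp (continuous_norm.comp (by fun_prop))).pow 2
  · intro ω
    have := exp_sub_ne a ω ha
    simp only [ne_eq, pow_eq_zero_iff, Complex.ofReal_eq_zero, norm_eq_zero]
    exact fun h => this (by simpa [sub_eq_zero] using h)

lemma hlog_deriv (a : ℝ) (ha : |a| < 1) (ω : ℝ) :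
    HasDerivAt (fun ω : ℝ => Complex.log (1 - a * Complex.exp (ω * Complex.I)))
      ((-(a * Complex.I * Complex.exp (ω * Complex.I))) / (1 - a * Complex.exp (ω * Complex.I))) ω := by
  have h0 : HasDerivAt (fun ω : ℝ => ((ω : ℂ))) 1 ω := Complex.ofRealCLM.hasDerivAt
  have h1 := (((h0.mul_const Complex.I).cexp).const_mul (a : ℂ)).const_sub 1
  have h2 := h1.clog_real (slit a ω ha)
  convert h2 using 1
  ring

lemma neg_cast (ω : ℝ) : ((-ω : ℝ) : ℂ) * Complex.I = -ω * Complex.I := by push_cast; ring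

lemma exp_neg_eq (ω : ℝ) :
    Complex.exp (-ω * Complex.I) = (Complex.exp (ω * Complex.I))⁻¹ := by
  rw [← Complex.exp_neg]; ring_nf

lemma pf (A B C d za oaz N : ℂ) (h1 : za ≠ 0) (h2 : oaz ≠ 0) (hd : d ≠ 0)
    (hN : N*d = C*(za*oaz) + A*oaz + (B*za - B*(za*oaz))) :
    N/(za*oaz) = C/d + (A/d)/za + ((B/d)/oaz - B/d) := by
  rw [div_eq_iff (mul_ne_zero h1 h2)]
  field_simp
  linear_combination hN

lemma ptwise (a s₁ s₂ ω : ℝ) (ha0' : (a:ℂ) ≠ 0) (ha2 : (1:ℂ) - (a:ℂ)^2 ≠ 0)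
    (hz : Complex.exp ((ω:ℂ) * Complex.I) ≠ 0)
    (hza : Complex.exp ((ω:ℂ) * Complex.I) - (a:ℂ) ≠ 0)
    (h1az : (1:ℂ) - a * Complex.exp ((ω:ℂ) * Complex.I) ≠ 0) :
    ((Complex.exp ((ω:ℂ) * Complex.I))⁻¹ - (s₁ : ℂ)) * (Complex.exp ((ω:ℂ) * Complex.I) - (s₂ : ℂ)) /
        ((Complex.exp ((ω:ℂ) * Complex.I) - a) * ((Complex.exp ((ω:ℂ) * Complex.I))⁻¹ - a))
      = ((s₁:ℂ)/a + ((a:ℂ) - s₁)*(1 - a*s₂)/(a*(1 - (a:ℂ)^2))) * 1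
        + (-Complex.I*((1 - (s₁:ℂ)*a)*((a:ℂ) - s₂)/(1 - (a:ℂ)^2))/a) *
            (-(↑a * ((Complex.exp (↑ω * Complex.I))⁻¹ * (-1 * Complex.I))) / (1 - ↑a * (Complex.exp (↑ω * Complex.I))⁻¹))
        + (((a:ℂ) - s₁)*(1 - a*s₂)/(a*(1 - (a:ℂ)^2))) * Complex.I *
            (-(↑a * Complex.I * Complex.exp (↑ω * Complex.I)) / (1 - ↑a * Complex.exp (↑ω * Complex.I))) := by
  set z := Complex.exp ((ω:ℂ) * Complex.I) with hzdef
  have h1az' : (1:ℂ) - ↑a * z⁻¹ ≠ 0 := by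
    rw [show (1:ℂ) - ↑a * z⁻¹ = (z - a)/z by field_simp]
    exact div_ne_zero hza hz
  have hzinva : z⁻¹ - (a:ℂ) ≠ 0 := by
    rw [show z⁻¹ - (a:ℂ) = (1 - a*z)/z by field_simp]
    exact div_ne_zero h1az hz
  -- step 1: the log-derivative terms
  have e1 : (-Complex.I*((1 - (s₁:ℂ)*a)*((a:ℂ) - s₂)/(1 - (a:ℂ)^2))/a) *
        (-(↑a * (z⁻¹ * (-1 * Complex.I))) / (1 - ↑a * z⁻¹))
      = ((1 - (s₁:ℂ)*a)*((a:ℂ) - s₂)/(1 - (a:ℂ)^2)) / (z - a) := by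
    rw [show (1:ℂ) - ↑a * z⁻¹ = (z - a)/z by field_simp]
    rw [div_div_eq_mul_div, eq_div_iff hza]
    field_simp
    ring_nf
    simp only [Complex.I_sq]
    ring
  have e2 : (((a:ℂ) - s₁)*(1 - a*s₂)/(a*(1 - (a:ℂ)^2))) * Complex.I *
        (-(↑a * Complex.I * z) / (1 - ↑a * z))
      = (((a:ℂ) - s₁)*(1 - a*s₂)/(a*(1 - (a:ℂ)^2)))/(1 - a*z)
        - (((a:ℂ) - s₁)*(1 - a*s₂)/(a*(1 - (a:ℂ)^2))) := by
    set B : ℂ := ((a:ℂ) - s₁)*(1 - a*s₂)/(a*(1 - (a:ℂ)^2)) with hB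
    rw [show B/(1 - (a:ℂ)*z) - B = B*(a*z)/(1 - a*z) by field_simp; ring]
    rw [← mul_div_assoc]
    congr 1
    ring_nf
    simp only [Complex.I_sq]
    ring
  rw [e1, e2]
  -- step 2: rewrite LHS to a clean fraction
  have hL : (z⁻¹ - (s₁ : ℂ)) * (z - (s₂ : ℂ)) / ((z - a) * (z⁻¹ - a))
      = ((1 - s₁*z)*(z - s₂)) / ((z - a) * (1 - a*z)) := by
    rw [div_eq_div_iff (mul_ne_zero hza hzinva) (mul_ne_zero hza h1az)]
    linear_combination (((s₁:ℂ) - a)*(z - a)*(z - s₂)) * (mul_inv_cancel₀ hz)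
  rw [hL, mul_one]
  have hd : (a:ℂ)*(1 - (a:ℂ)^2) ≠ 0 := mul_ne_zero ha0' ha2
  have r1 : (1 - (s₁:ℂ)*a)*((a:ℂ) - s₂)/(1 - (a:ℂ)^2)
      = ((a:ℂ)*((1 - (s₁:ℂ)*a)*((a:ℂ) - s₂)))/((a:ℂ)*(1 - (a:ℂ)^2)) := by
    rw [mul_div_mul_left _ _ ha0']
  have r2 : (s₁:ℂ)/a + ((a:ℂ) - s₁)*(1 - a*s₂)/(a*(1 - (a:ℂ)^2))
      = ((s₁:ℂ)*(1 - (a:ℂ)^2) + ((a:ℂ) - s₁)*(1 - a*s₂))/((a:ℂ)*(1 - (a:ℂ)^2)) := by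
    rw [div_add_div _ _ ha0' hd, div_eq_div_iff (mul_ne_zero ha0' hd) hd]
    ring
  rw [r1, r2]
  exact pf _ _ _ _ _ _ _ hza h1az hd (by ring)

lemma main_ne (a s₁ s₂ : ℝ) (ha : |a| < 1) (ha0 : a ≠ 0) :
    ∫ ω in (-π)..π,
        (Complex.exp (-ω * Complex.I) - (s₁ : ℂ)) * (Complex.exp (ω * Complex.I) - (s₂ : ℂ)) /
          (((‖Complex.exp (ω * Complex.I) - (a : ℂ)‖ : ℝ) : ℂ)) ^ 2
      = ((s₁:ℂ)/a + ((a:ℂ) - s₁)*(1 - a*s₂)/(a*(1 - (a:ℂ)^2))) * (2*π) := by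
  have ha0' : (a:ℂ) ≠ 0 := Complex.ofReal_ne_zero.mpr ha0
  have ha2 : (1:ℂ) - (a:ℂ)^2 ≠ 0 := by
    have h : (1 - a^2 : ℝ) ≠ 0 := by nlinarith [abs_nonneg a, _root_.sq_abs a]
    intro h'
    apply h
    have : ((1 - a^2 : ℝ) : ℂ) = 0 := by push_cast; linear_combination h'
    exact_mod_cast this
  set C : ℂ := (s₁:ℂ)/a + ((a:ℂ) - s₁)*(1 - a*s₂)/(a*(1 - (a:ℂ)^2)) with hC
  set D : ℂ := -Complex.I*((1 - (s₁:ℂ)*a)*((a:ℂ) - s₂)/(1 - (a:ℂ)^2))/a with hD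
  set B : ℂ := ((a:ℂ) - s₁)*(1 - a*s₂)/(a*(1 - (a:ℂ)^2)) with hB
  set F : ℝ → ℂ := fun ω => C*ω + D * Complex.log (1 - a * Complex.exp (-ω*Complex.I))
      + B*Complex.I*Complex.log (1 - a * Complex.exp (ω*Complex.I)) with hF
  have hderiv : ∀ ω ∈ Set.uIcc (-π) π, HasDerivAt F
      ((Complex.exp (-ω * Complex.I) - (s₁ : ℂ)) * (Complex.exp (ω * Complex.I) - (s₂ : ℂ)) /
          (((‖Complex.exp (ω * Complex.I) - (a : ℂ)‖ : ℝ) : ℂ)) ^ 2) ω := by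
    intro ω _
    have h0 : HasDerivAt (fun ω : ℝ => ((ω : ℂ))) 1 ω := Complex.ofRealCLM.hasDerivAt
    have hslit' : (1:ℂ) - a * Complex.exp (-ω*Complex.I) ∈ Complex.slitPlane := by
      have := slit a (-ω) ha; rwa [neg_cast] at this
    have h1 : HasDerivAt (fun ω : ℝ => (1:ℂ) - a * Complex.exp (-ω*Complex.I))
        (-((a:ℂ) * (Complex.exp (-ω*Complex.I) * (-1 * Complex.I)))) ω :=
      (((h0.neg.mul_const Complex.I).cexp).const_mul (a:ℂ)).const_sub 1
    have h2 := h1.clog_real hslit'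
    have hlin : HasDerivAt (fun ω : ℝ => C*(ω:ℂ)) (C*1) ω := h0.const_mul C
    have hT := (hlin.add (h2.const_mul D)).add ((hlog_deriv a ha ω).const_mul (B*Complex.I))
    refine hT.congr_deriv (Eq.symm ?_)
    rw [denom_rw, exp_neg_eq, hC, hB, hD]
    exact ptwise a s₁ s₂ ω ha0' ha2 (Complex.exp_ne_zero _)
      (exp_sub_ne a ω ha) (one_sub_ne a ω ha)
  have hint := intervalIntegral.integral_eq_sub_of_hasDerivAt hderiv
    ((hcont a s₁ s₂ ha).intervalIntegrable _ _)
  rw [hint]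
  have he2 : Complex.exp ((π:ℝ) * Complex.I) = -1 := by
    simpa using Complex.exp_pi_mul_I
  have he1 : Complex.exp (-((π:ℝ) * Complex.I)) = -1 := by
    rw [show -((π:ℝ)*Complex.I) = -(π:ℝ)*Complex.I by ring, exp_neg_eq, he2]; norm_num
  simp only [hF, Complex.ofReal_neg, neg_neg, neg_mul, neg_neg]
  rw [he1, he2]
  push_cast
  ring

lemma main_zero (s₁ s₂ : ℝ) :
    ∫ ω in (-π)..π,
        (Complex.exp (-ω * Complex.I) - (s₁ : ℂ)) * (Complex.exp (ω * Complex.I) - (s₂ : ℂ)) /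
          (((‖Complex.exp (ω * Complex.I) - ((0:ℝ) : ℂ)‖ : ℝ) : ℂ)) ^ 2
      = (1 + (s₁:ℂ)*s₂) * (2*π) := by
  set F : ℝ → ℂ := fun ω => (1 + (s₁:ℂ)*s₂)*ω - (s₂:ℂ)*Complex.I*Complex.exp (-ω*Complex.I)
      + (s₁:ℂ)*Complex.I*Complex.exp (ω*Complex.I) with hF
  have hderiv : ∀ ω ∈ Set.uIcc (-π) π, HasDerivAt F
      ((Complex.exp (-ω * Complex.I) - (s₁ : ℂ)) * (Complex.exp (ω * Complex.I) - (s₂ : ℂ)) /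
          (((‖Complex.exp (ω * Complex.I) - ((0:ℝ) : ℂ)‖ : ℝ) : ℂ)) ^ 2) ω := by
    intro ω _
    have h0 : HasDerivAt (fun ω : ℝ => ((ω : ℂ))) 1 ω := Complex.ofRealCLM.hasDerivAt
    have hE1 := ((h0.neg.mul_const Complex.I).cexp)
    have hE2 := ((h0.mul_const Complex.I).cexp)
    have hT := ((h0.const_mul ((1:ℂ) + (s₁:ℂ)*s₂)).sub (hE1.const_mul ((s₂:ℂ)*Complex.I))).add
      (hE2.const_mul ((s₁:ℂ)*Complex.I))
    refine hT.congr_deriv (Eq.symm ?_)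
    have he : Complex.exp (-ω*Complex.I) * Complex.exp (ω*Complex.I) = 1 := by
      rw [← Complex.exp_add]; ring_nf; exact Complex.exp_zero
    simp only [Complex.ofReal_zero, sub_zero, Complex.norm_exp_ofReal_mul_I,
      Complex.ofReal_one, one_pow, div_one]
    linear_combination he + (-(s₂:ℂ)*Complex.exp (-ω*Complex.I)
      - (s₁:ℂ)*Complex.exp (ω*Complex.I))*Complex.I_sq
  have hint := intervalIntegral.integral_eq_sub_of_hasDerivAt hderiv
    ((hcont 0 s₁ s₂ (by norm_num)).intervalIntegrable _ _)
  rw [hint]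
  have he2 : Complex.exp ((π:ℝ) * Complex.I) = -1 := by
    simpa using Complex.exp_pi_mul_I
  have he1 : Complex.exp (-((π:ℝ) * Complex.I)) = -1 := by
    rw [show -((π:ℝ)*Complex.I) = -(π:ℝ)*Complex.I by ring, exp_neg_eq, he2]; norm_num
  simp only [hF, Complex.ofReal_neg, neg_neg, neg_mul, neg_neg]
  rw [he1, he2]
  ring

theorem cross_term_integral (a s₁ s₂ : ℝ) (ha : |a| < 1) :
    (1 / (2 * (π : ℂ))) * ∫ ω in (-π)..π,
        (Complex.exp (-ω * Complex.I) - (s₁ : ℂ)) * (Complex.exp (ω * Complex.I) - (s₂ : ℂ)) /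
          ((‖Complex.exp (ω * Complex.I) - (a : ℂ)‖ : ℝ) : ℂ) ^ 2
      = (((1 + s₁ * s₂ - (s₁ + s₂) * a) / (1 - a ^ 2) : ℝ) : ℂ) := by
  have hπ : ((π:ℝ):ℂ) ≠ 0 := Complex.ofReal_ne_zero.mpr Real.pi_ne_zero
  rcases eq_or_ne a 0 with rfl | ha0
  · rw [main_zero]
    push_cast
    field_simp
    ring
  · have ha0' : (a:ℂ) ≠ 0 := Complex.ofReal_ne_zero.mpr ha0
    have ha2 : (1:ℂ) - (a:ℂ)^2 ≠ 0 := by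
      have h : (1 - a^2 : ℝ) ≠ 0 := by nlinarith [abs_nonneg a, _root_.sq_abs a]
      intro h'
      apply h
      have : ((1 - a^2 : ℝ) : ℂ) = 0 := by push_cast; linear_combination h'
      exact_mod_cast this
    rw [main_ne a s₁ s₂ ha ha0]
    have hne : (1:ℂ) - (a:ℂ)^2 ≠ 0 := ha2
    push_cast
    field_simp
    ring
end
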